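/- Let λ be a countable limit ordinal and let 𝒞 be the smallest collection of subsets of Baire space containing all Σ⁰_ξ sets for ξ < λ and closed under unions of Σ⁰_ξ-separated sequences for every ξ < λ. Then every set in 𝒞 is Δ⁰_λ. -/

import Mathlib

/-- The additive Borel pointclasses `Σ⁰_ξ` on a topological space, for ordinals
`ξ ≥ 1`: `Σ⁰_1` is the class of open sets, and for `ξ > 1` a set is in `Σ⁰_ξ` if it is
open or a countable union of complements of sets in classes `Σ⁰_{ξ'}` with
`1 ≤ ξ' < ξ`. -/
def Sigma0 (X : Type) [TopologicalSpace X] (ξ : Ordinal.{0}) : Set (Set X) :=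
  {A | IsOpen A ∨ ∃ (f : ℕ → Set X) (o : ℕ → {o' : Ordinal.{0} // 1 ≤ o' ∧ o' < ξ}),
    (∀ n, (f n)ᶜ ∈ Sigma0 X (o n).1) ∧ A = ⋃ n, f n}
termination_by ξ
decreasing_by exact (o n).2.2


open Set

lemma sigma0_def (X : Type) [TopologicalSpace X] (ξ : Ordinal.{0}) :
    Sigma0 X ξ = {A | IsOpen A ∨ ∃ (f : ℕ → Set X) (o : ℕ → {o' : Ordinal.{0} // 1 ≤ o' ∧ o' < ξ}),
      (∀ n, (f n)ᶜ ∈ Sigma0 X (o n).1) ∧ A = ⋃ n, f n} := by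
  rw [Sigma0]

variable {X : Type} [TopologicalSpace X]

lemma sigma0_open {A : Set X} (h : IsOpen A) (ξ : Ordinal.{0}) : A ∈ Sigma0 X ξ := by
  rw [sigma0_def]; exact Or.inl h

lemma sigma0_mono {ξ η : Ordinal.{0}} (h : ξ ≤ η) : Sigma0 X ξ ⊆ Sigma0 X η := by
  intro A hA
  rw [sigma0_def] at hA ⊢
  rcases hA with h' | ⟨f, o, hf, rfl⟩
  · exact Or.inl h'
  · exact Or.inr ⟨f, fun n => ⟨(o n).1, (o n).2.1, lt_of_lt_of_le (o n).2.2 h⟩, hf, rfl⟩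

lemma sigma0_compl {ξ η : Ordinal.{0}} {A : Set X} (h1 : 1 ≤ ξ) (hξη : ξ < η)
    (hA : A ∈ Sigma0 X ξ) : Aᶜ ∈ Sigma0 X η := by
  rw [sigma0_def]
  refine Or.inr ⟨fun _ => Aᶜ, fun _ => ⟨ξ, h1, hξη⟩, fun n => by simpa using hA,
    (iUnion_const _).symm⟩

lemma sigma0_closed {η : Ordinal.{0}} {A : Set X} (h : IsClosed A) (hη : 1 < η) :
    A ∈ Sigma0 X η := by
  have := sigma0_compl le_rfl hη (sigma0_open h.isOpen_compl 1)
  simpa using this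

/-- In the Baire space, every open set is a countable union of closed sets. -/
lemma baire_open_fsigma {U : Set (ℕ → ℕ)} (h : IsOpen U) :
    ∃ C : ℕ → Set (ℕ → ℕ), (∀ n, IsClosed (C n)) ∧ U = ⋃ n, C n := by
  letI : MetricSpace (ℕ → ℕ) := PiNat.metricSpaceNatNat
  refine ⟨fun n => {x | ∀ y ∈ Uᶜ, (1 : ℝ)/(n+1) ≤ dist x y}, fun n => ?_, ?_⟩
  · have : {x : ℕ → ℕ | ∀ y ∈ Uᶜ, (1 : ℝ)/(n+1) ≤ dist x y}
        = ⋂ y ∈ Uᶜ, {x | (1 : ℝ)/(n+1) ≤ dist x y} := by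
      ext x; simp
    show IsClosed {x : ℕ → ℕ | ∀ y ∈ Uᶜ, (1 : ℝ)/(n+1) ≤ dist x y}
    rw [this]
    exact isClosed_biInter fun y _ =>
      isClosed_le continuous_const (continuous_id.dist continuous_const)
  · ext x
    simp only [mem_iUnion, mem_setOf_eq]
    constructor
    · intro hx
      rcases Metric.isOpen_iff.1 h x hx with ⟨ε, hε, hball⟩
      rcases exists_nat_one_div_lt hε with ⟨n, hn⟩
      refine ⟨n, fun y hy => ?_⟩
      by_contra hlt
      push_neg at hlt
      exact hy (hball (Metric.mem_ball.2 (by rw [dist_comm]; linarith)))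
    · rintro ⟨n, hn⟩
      by_contra hx
      have := hn x hx
      simp at this
      have : (1:ℝ)/(n+1) > 0 := by positivity
      linarith [hn x hx, dist_self x]

/-- Every `Σ⁰_η` set in Baire space, for `η > 1`, can be written in union form. -/
lemma sigma0_union_form {η : Ordinal.{0}} {A : Set (ℕ → ℕ)} (hη : 1 < η)
    (hA : A ∈ Sigma0 (ℕ → ℕ) η) :
    ∃ (f : ℕ → Set (ℕ → ℕ)) (o : ℕ → {o' : Ordinal.{0} // 1 ≤ o' ∧ o' < η}),
      (∀ n, (f n)ᶜ ∈ Sigma0 (ℕ → ℕ) (o n).1) ∧ A = ⋃ n, f n := by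
  rw [sigma0_def] at hA
  rcases hA with h | h
  · rcases baire_open_fsigma h with ⟨C, hC, rfl⟩
    exact ⟨C, fun _ => ⟨1, le_rfl, hη⟩, fun n => sigma0_open (hC n).isOpen_compl 1, rfl⟩
  · exact h

lemma sigma0_iUnion {η : Ordinal.{0}} {A : ℕ → Set (ℕ → ℕ)} (hη : 1 < η)
    (hA : ∀ n, A n ∈ Sigma0 (ℕ → ℕ) η) : (⋃ n, A n) ∈ Sigma0 (ℕ → ℕ) η := by
  choose f o hf hAU using fun n => sigma0_union_form hη (hA n)
  let e : ℕ × ℕ ≃ ℕ := Denumerable.eqv (ℕ × ℕ)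
  rw [sigma0_def]
  refine Or.inr ⟨fun k => f (e.symm k).1 (e.symm k).2, fun k => o (e.symm k).1 (e.symm k).2,
    fun k => hf _ _, ?_⟩
  ext x
  simp only [mem_iUnion]
  constructor
  · rintro ⟨n, hx⟩
    rw [hAU n] at hx
    rcases mem_iUnion.1 hx with ⟨m, hm⟩
    exact ⟨e (n, m), by simpa using hm⟩
  · rintro ⟨k, hk⟩
    exact ⟨(e.symm k).1, (hAU _).symm ▸ mem_iUnion.2 ⟨(e.symm k).2, hk⟩⟩

lemma sigma0_union {η : Ordinal.{0}} {A B : Set (ℕ → ℕ)} (hη : 1 < η)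
    (hA : A ∈ Sigma0 (ℕ → ℕ) η) (hB : B ∈ Sigma0 (ℕ → ℕ) η) :
    A ∪ B ∈ Sigma0 (ℕ → ℕ) η := by
  have : A ∪ B = ⋃ n : ℕ, (if n = 0 then A else B) := by
    ext x
    simp only [mem_union, mem_iUnion]
    constructor
    · rintro (h | h)
      exacts [⟨0, by simpa⟩, ⟨1, by simpa⟩]
    · rintro ⟨n, hn⟩
      split at hn
      exacts [Or.inl hn, Or.inr hn]
  rw [this]
  exact sigma0_iUnion hη fun n => by split <;> assumption

lemma two_lt_of_isLimit {η : Ordinal.{0}} (hη : Order.IsSuccLimit η) : 2 < η := by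
  have h1 : (1 : Ordinal) < η := by
    have := hη.succ_lt (by simpa using hη.bot_lt : (0 : Ordinal) < η)
    simpa using this
  have := hη.succ_lt h1
  simpa [← Ordinal.add_one_eq_succ, one_add_one_eq_two] using this

lemma sigma0_inter {η : Ordinal.{0}} {A B : Set (ℕ → ℕ)} (hη : Order.IsSuccLimit η)
    (hA : A ∈ Sigma0 (ℕ → ℕ) η) (hB : B ∈ Sigma0 (ℕ → ℕ) η) :
    A ∩ B ∈ Sigma0 (ℕ → ℕ) η := by
  have h2 : (2 : Ordinal) < η := two_lt_of_isLimit hη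
  have h1 : (1 : Ordinal) < η := lt_trans one_lt_two h2
  rcases sigma0_union_form h1 hA with ⟨f, o, hf, rfl⟩
  rcases sigma0_union_form h1 hB with ⟨g, p, hg, rfl⟩
  have key : ∀ n m, f n ∩ g m ∈ Sigma0 (ℕ → ℕ) η := by
    intro n m
    set q : Ordinal := max (max (o n).1 (p m).1) 2 with hq
    have hq1 : 1 < q := lt_of_lt_of_le one_lt_two (le_max_right _ _)
    have hqη : q < η := max_lt (max_lt (o n).2.2 (p m).2.2) h2
    have hcompl : (f n ∩ g m)ᶜ ∈ Sigma0 (ℕ → ℕ) q := by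
      rw [compl_inter]
      exact sigma0_union hq1
        (sigma0_mono (le_trans (le_max_left _ _) (le_max_left _ _)) (hf n))
        (sigma0_mono (le_trans (le_max_right _ _) (le_max_left _ _)) (hg m))
    rw [sigma0_def]
    exact Or.inr ⟨fun _ => f n ∩ g m, fun _ => ⟨q, le_of_lt hq1, hqη⟩,
      fun _ => hcompl, (iUnion_const _).symm⟩
  rw [iUnion_inter]
  refine sigma0_iUnion h1 fun n => ?_
  rw [inter_iUnion]
  exact sigma0_iUnion h1 fun m => key n m


/-- Wadge's theorem, easy inclusion: for a countable limit ordinal `λ`, every set in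
the smallest collection of subsets of Baire space containing all `Σ⁰_ξ` sets for
`1 ≤ ξ < λ` and closed under unions of `Σ⁰_ξ`-separated sequences for all
`1 ≤ ξ < λ` is `Δ⁰_λ`. -/
theorem wadge_easy_inclusion (lam : Ordinal.{0}) (hlim : Order.IsSuccLimit lam)
    (hcount : lam.card ≤ Cardinal.aleph0) :
    ⋂₀ {D : Set (Set (ℕ → ℕ)) |
        (∀ ξ : Ordinal.{0}, 1 ≤ ξ → ξ < lam → Sigma0 (ℕ → ℕ) ξ ⊆ D) ∧
        (∀ (ξ : Ordinal.{0}) (A U : ℕ → Set (ℕ → ℕ)), 1 ≤ ξ → ξ < lam →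
          (∀ n, A n ∈ D) →
          (∀ n, U n ∈ Sigma0 (ℕ → ℕ) ξ) → Pairwise (Function.onFun Disjoint U) →
          (∀ n, A n ⊆ U n) → (⋃ n, A n) ∈ D)}
      ⊆ {A | A ∈ Sigma0 (ℕ → ℕ) lam ∧ Aᶜ ∈ Sigma0 (ℕ → ℕ) lam} := by
  have h2 : (2 : Ordinal) < lam := two_lt_of_isLimit hlim
  have h1 : (1 : Ordinal) < lam := lt_trans one_lt_two h2
  intro A hA
  refine hA {A | A ∈ Sigma0 (ℕ → ℕ) lam ∧ Aᶜ ∈ Sigma0 (ℕ → ℕ) lam} ⟨?_, ?_⟩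
  · -- all Σ⁰_ξ sets, ξ < lam, are Δ⁰_lam
    intro ξ hξ1 hξlam B hB
    exact ⟨sigma0_mono (le_of_lt hξlam) hB, sigma0_compl hξ1 hξlam hB⟩
  · -- closure under Σ⁰_ξ-separated unions
    intro ξ A U hξ1 hξlam hAD hU hdisj hAU
    constructor
    · exact sigma0_iUnion h1 fun n => (hAD n).1
    · have key : (⋃ n, A n)ᶜ = (⋃ n, U n)ᶜ ∪ ⋃ n, (U n ∩ (A n)ᶜ) := by
        ext x
        simp only [mem_compl_iff, mem_iUnion, mem_union, mem_inter_iff, not_exists]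
        constructor
        · intro hx
          by_cases hxu : ∃ n, x ∈ U n
          · rcases hxu with ⟨n, hn⟩
            exact Or.inr ⟨n, hn, hx n⟩
          · push_neg at hxu
            exact Or.inl fun n => hxu n
        · rintro (hx | ⟨n, hxU, hxA⟩) m
          · exact fun hm => hx m (hAU m hm)
          · intro hm
            rcases eq_or_ne m n with rfl | hmn
            · exact hxA hm
            · exact (hdisj hmn).le_bot ⟨hAU m hm, hxU⟩ |>.elim
      rw [key]
      refine sigma0_union h1 ?_ ?_
      · -- complement of ⋃ U n
        have hUmem : (⋃ n, U n) ∈ Sigma0 (ℕ → ℕ) (max ξ 2) :=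
          sigma0_iUnion (lt_of_lt_of_le one_lt_two (le_max_right _ _))
            fun n => sigma0_mono (le_max_left _ _) (hU n)
        exact sigma0_compl (le_trans (le_of_lt one_lt_two) (le_max_right _ _))
          (max_lt hξlam h2) hUmem
      · exact sigma0_iUnion h1 fun n =>
          sigma0_inter hlim (sigma0_mono (le_of_lt hξlam) (hU n)) (hAD n).2
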